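/- The projected triple ratio of seven vectors in F⁴ factors as a ratio of two projected cross ratios: for v1,...,v7 ∈ F⁴ in general position, (1|234567) = (12|3457)/(13|2467), where (1|234567) = Δ(1235)Δ(1346)Δ(1427)/(Δ(1236)Δ(1347)Δ(1425)), (12|3457) = Δ(1235)Δ(1247)/(Δ(1237)Δ(1245)) and (13|2467) = Δ(1326)Δ(1347)/(Δ(1327)Δ(1346)). -/

import Mathlib

def det4 {F : Type*} [Field F] (u v w x : Fin 4 → F) : F :=
  Matrix.det (Matrix.of fun i j => ![u, v, w, x] j i)
/-- Projected cross ratio (i1 i2 | i3 i4 i5 i6). -/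
def pcr {F : Type*} [Field F] (a b c d e f : Fin 4 → F) : F :=
  det4 a b c e * det4 a b d f / (det4 a b c f * det4 a b d e)
/-- Projected triple ratio (i1 | i2 i3 i4 i5 i6 i7). -/
def ptr {F : Type*} [Field F] (a b c d e f g : Fin 4 → F) : F :=
  det4 a b c e * det4 a c d f * det4 a d b g /
    (det4 a b c f * det4 a c d g * det4 a d b e)

lemma det4_swap23 {F : Type*} [Field F] (a b c d : Fin 4 → F) :
    det4 a c b d = - det4 a b c d := by
  simp [det4, Matrix.det_succ_row_zero, Fin.sum_univ_succ, Fin.succAbove]; ring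

theorem stmt13 {F : Type*} [Field F] (v : Fin 7 → Fin 4 → F)
    (hgen : ∀ i j k l : Fin 7, i ≠ j → i ≠ k → i ≠ l → j ≠ k → j ≠ l → k ≠ l →
      det4 (v i) (v j) (v k) (v l) ≠ 0) :
    ptr (v 0) (v 1) (v 2) (v 3) (v 4) (v 5) (v 6)
      = pcr (v 0) (v 1) (v 2) (v 3) (v 4) (v 6)
        / pcr (v 0) (v 2) (v 1) (v 3) (v 5) (v 6) := by
  have h0124 := hgen 0 1 2 4 (by decide) (by decide) (by decide) (by decide) (by decide) (by decide)
  have h0125 := hgen 0 1 2 5 (by decide) (by decide) (by decide) (by decide) (by decide) (by decide)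
  have h0126 := hgen 0 1 2 6 (by decide) (by decide) (by decide) (by decide) (by decide) (by decide)
  have h0134 := hgen 0 1 3 4 (by decide) (by decide) (by decide) (by decide) (by decide) (by decide)
  have h0136 := hgen 0 1 3 6 (by decide) (by decide) (by decide) (by decide) (by decide) (by decide)
  have h0235 := hgen 0 2 3 5 (by decide) (by decide) (by decide) (by decide) (by decide) (by decide)
  have h0236 := hgen 0 2 3 6 (by decide) (by decide) (by decide) (by decide) (by decide) (by decide)
  unfold ptr pcr
  rw [det4_swap23 (v 0) (v 1) (v 3) (v 6), det4_swap23 (v 0) (v 1) (v 3) (v 4),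
    det4_swap23 (v 0) (v 1) (v 2) (v 6), det4_swap23 (v 0) (v 1) (v 2) (v 5)]
  field_simp
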